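/- With Kalman gain K = BHᵀ(HBHᵀ+R)⁻¹, the analysis covariance satisfies B − KHB = (I − KH)B, and (I − KH)B is symmetric positive semidefinite. -/

import Mathlib

open Matrix

lemma psd_fromBlocks_zero {p q : ℕ} {X : Matrix (Fin p) (Fin p) ℝ} (hX : X.PosSemidef) :
    (fromBlocks X 0 0 (0 : Matrix (Fin q) (Fin q) ℝ)).PosSemidef := by
  rw [posSemidef_iff_dotProduct_mulVec]
  constructor
  · unfold Matrix.IsHermitian
    rw [fromBlocks_conjTranspose, hX.1.eq]
    simp
  · intro x
    have hx : x = Sum.elim (x ∘ Sum.inl) (x ∘ Sum.inr) := (Sum.elim_comp_inl_inr x).symm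
    rw [hx, fromBlocks_mulVec]
    have h := hX.dotProduct_mulVec_nonneg (x ∘ Sum.inl)
    simpa [dotProduct, Fintype.sum_sum_type, mulVec] using h

/-- With Kalman gain `K = BHᵀ(HBHᵀ+R)⁻¹`, the analysis covariance satisfies
`B − KHB = (I − KH)B`, and `(I − KH)B` is symmetric positive semidefinite. -/
theorem analysis_covariance_posSemidef {n m : ℕ}
    (B : Matrix (Fin n) (Fin n) ℝ) (R : Matrix (Fin m) (Fin m) ℝ)
    (H : Matrix (Fin m) (Fin n) ℝ) (hB : B.PosDef) (hR : R.PosDef)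
    (K : Matrix (Fin n) (Fin m) ℝ) (hK : K = B * Hᵀ * (H * B * Hᵀ + R)⁻¹) :
    B - K * H * B = (1 - K * H) * B ∧ ((1 - K * H) * B).PosSemidef := by
  have hTr : ∀ {a b : ℕ} (M : Matrix (Fin a) (Fin b) ℝ), Mᴴ = Mᵀ :=
    fun M => conjTranspose_eq_transpose_of_trivial M
  have hBsym : Bᵀ = B := by rw [← hTr]; exact hB.1
  set S : Matrix (Fin m) (Fin m) ℝ := H * B * Hᵀ + R with hS
  have hSB : (H * B * Hᵀ).PosSemidef := by
    have := hB.posSemidef.mul_mul_conjTranspose_same H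
    rwa [hTr] at this
  have hSpd : S.PosDef := Matrix.PosDef.posSemidef_add hSB hR
  haveI : Invertible S := hSpd.isUnit.invertible
  have hBlock : (fromBlocks S (H * B) (H * B)ᴴ B).PosSemidef := by
    have h1 : (fromBlocks R 0 0 (0 : Matrix (Fin n) (Fin n) ℝ)).PosSemidef :=
      psd_fromBlocks_zero hR.posSemidef
    have h2 : ((fromBlocks H 0 1 (0 : Matrix (Fin n) (Fin m) ℝ)) *
        (fromBlocks B 0 0 (0 : Matrix (Fin m) (Fin m) ℝ)) *
        (fromBlocks H 0 1 (0 : Matrix (Fin n) (Fin m) ℝ))ᴴ).PosSemidef :=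
      (psd_fromBlocks_zero hB.posSemidef).mul_mul_conjTranspose_same _
    have heq : fromBlocks S (H * B) (H * B)ᴴ B =
        (fromBlocks H 0 1 (0 : Matrix (Fin n) (Fin m) ℝ)) *
        (fromBlocks B 0 0 (0 : Matrix (Fin m) (Fin m) ℝ)) *
        (fromBlocks H 0 1 (0 : Matrix (Fin n) (Fin m) ℝ))ᴴ +
        fromBlocks R 0 0 (0 : Matrix (Fin n) (Fin n) ℝ) := by
      rw [fromBlocks_conjTranspose, fromBlocks_multiply, fromBlocks_multiply,
        fromBlocks_add]
      congr 1 <;> simp [hS, hTr, Matrix.mul_assoc, hBsym]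
    rw [heq]
    exact h2.add h1
  have hschur : (B - (H * B)ᴴ * S⁻¹ * (H * B)).PosSemidef :=
    ((PosDef.fromBlocks₁₁ (H * B) B hSpd).mp hBlock)
  have hKH : (1 - K * H) * B = B - (H * B)ᴴ * S⁻¹ * (H * B) := by
    rw [hK, conjTranspose_mul, hTr, hTr, hBsym]
    rw [Matrix.sub_mul, Matrix.one_mul]
    rw [Matrix.mul_assoc (B * Hᵀ * S⁻¹) H B, Matrix.mul_assoc (B * Hᵀ) S⁻¹ (H * B)]
  refine ⟨by rw [Matrix.sub_mul, Matrix.one_mul], ?_⟩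
  rw [hKH]
  exact hschur
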